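/- Let δ_1,…,δ_{n-1} ∈ (0,1] with δ_1^n δ_2^{n-1} ⋯ δ_{n-1}^2 = R^{-1}, let δ := δ_1⋯δ_{n-1}, and for 1 ≤ k ≤ n-2 define σ_k := (ρ_n/ρ_{k-1})^{1/(n+1-k)} where ρ_0 = 1, ρ_j = δ_1^j δ_2^{j-1}⋯δ_j, ρ_n = R^{-1}. Then σ_{n-1} = σ_n = δ and δ ≤ σ_{n-2} ≤ σ_{n-3} ≤ ⋯ ≤ σ_1 ≤ 1. -/

import Mathlib

/-- With `σ_k = (ρ_n/ρ_{k-1})^{1/(n+1-k)}`, one has `σ_{n-1} = σ_n = δ` and the chain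
`δ ≤ σ_{n-2} ≤ σ_{n-3} ≤ ⋯ ≤ σ_1 ≤ 1`, where `δ = δ_1 ⋯ δ_{n-1}`. -/
theorem stmt_3 (n : ℕ) (hn : 3 ≤ n) (R : ℝ) (hR : 1 ≤ R)
    (δ : ℕ → ℝ) (hδ : ∀ i ∈ Finset.Icc 1 (n - 1), 0 < δ i ∧ δ i ≤ 1)
    (hnorm : ∏ i ∈ Finset.Icc 1 (n - 1), δ i ^ (n + 1 - i) = R⁻¹)
    (ρ : ℕ → ℝ) (hρ0 : ρ 0 = 1)
    (hρ : ∀ k ∈ Finset.Icc 1 (n - 1), ρ k = ∏ i ∈ Finset.Icc 1 k, δ i ^ (k + 1 - i))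
    (hρn : ρ n = R⁻¹)
    (σ : ℕ → ℝ)
    (hσ : ∀ k : ℕ, 1 ≤ k → k ≤ n →
      σ k = (ρ n / ρ (k - 1)) ^ ((1 : ℝ) / ((n : ℝ) + 1 - (k : ℝ)))) :
    σ (n - 1) = ∏ i ∈ Finset.Icc 1 (n - 1), δ i
    ∧ σ n = ∏ i ∈ Finset.Icc 1 (n - 1), δ i
    ∧ (∏ i ∈ Finset.Icc 1 (n - 1), δ i) ≤ σ (n - 2)
    ∧ (∀ k : ℕ, 1 ≤ k → k ≤ n - 3 → σ (k + 1) ≤ σ k)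
    ∧ σ 1 ≤ 1 := by
  set δp : ℝ := ∏ i ∈ Finset.Icc 1 (n - 1), δ i with hδp
  set P : ℕ → ℝ := fun m => ∏ i ∈ Finset.Icc 1 (min m (n - 1)), δ i with hPdef
  -- basic positivity
  have hδpos : ∀ i ∈ Finset.Icc 1 (n - 1), 0 < δ i := fun i hi => (hδ i hi).1
  have hPpos : ∀ m, 0 < P m := by
    intro m
    apply Finset.prod_pos
    intro i hi
    apply hδpos
    simp only [Finset.mem_Icc] at hi ⊢
    omega
  have hδppos : 0 < δp := by
    apply Finset.prod_pos hδpos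
  -- P is antitone
  have hPmono : ∀ a b : ℕ, a ≤ b → P b ≤ P a := by
    intro a b hab
    set x := min a (n - 1) with hx
    set y := min b (n - 1) with hy
    have hxy : x ≤ y := by omega
    have hsplit : P b = P a * ∏ i ∈ Finset.Ioc x y, δ i := by
      simp only [hPdef, ← hx, ← hy]
      rw [show Finset.Icc 1 x = Finset.Ioc 0 x by exact Finset.Icc_add_one_left_eq_Ioc 0 x,
          show Finset.Icc 1 y = Finset.Ioc 0 y by exact Finset.Icc_add_one_left_eq_Ioc 0 y]
      rw [Finset.prod_Ioc_consecutive _ (Nat.zero_le x) hxy]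
    rw [hsplit]
    apply mul_le_of_le_one_right (hPpos a).le
    apply Finset.prod_le_one
    · intro i hi
      apply (hδpos i _).le
      simp only [Finset.mem_Ioc] at hi
      simp only [Finset.mem_Icc]
      omega
    · intro i hi
      apply (hδ i _).2
      simp only [Finset.mem_Ioc] at hi
      simp only [Finset.mem_Icc]
      omega
  have hdpP : δp = P (n - 1) := by
    simp [hPdef, min_self, hδp]
  have hdpPn : δp = P n := by
    simp only [hPdef]
    rw [min_eq_right (by omega)]
  -- extended ρ formula
  have hρ' : ∀ k, k ≤ n - 1 → ρ k = ∏ i ∈ Finset.Icc 1 k, δ i ^ (k + 1 - i) := by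
    intro k hk
    rcases Nat.eq_zero_or_pos k with h0 | h1
    · subst h0; simp [hρ0]
    · exact hρ k (Finset.mem_Icc.2 ⟨h1, hk⟩)
  -- the recurrence ρ m = ρ (m-1) * P m
  have hrec : ∀ m, 1 ≤ m → m ≤ n → ρ m = ρ (m - 1) * P m := by
    intro m hm1 hmn
    rcases eq_or_lt_of_le hmn with hmeq | hmlt
    · subst hmeq
      rw [hρn, ← hnorm, hρ' (m - 1) (by omega)]
      have hPm : P m = ∏ i ∈ Finset.Icc 1 (m - 1), δ i := by
        simp only [hPdef]
        rw [min_eq_right (by omega)]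
      rw [hPm, ← Finset.prod_mul_distrib]
      apply Finset.prod_congr rfl
      intro i hi
      simp only [Finset.mem_Icc] at hi
      rw [← pow_succ]
      congr 1
      omega
    · have hmn1 : m ≤ n - 1 := by omega
      obtain ⟨m', rfl⟩ : ∃ m', m = m' + 1 := ⟨m - 1, by omega⟩
      have hm'1 : m' + 1 - 1 = m' := by omega
      rw [hρ' (m' + 1) hmn1, hm'1, hρ' m' (by omega)]
      have hPm : P (m' + 1) = (∏ i ∈ Finset.Icc 1 m', δ i) * δ (m' + 1) := by
        simp only [hPdef]
        rw [min_eq_left (by omega)]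
        exact Finset.prod_Icc_succ_top (by omega) _
      rw [hPm, Finset.prod_Icc_succ_top (by omega : 1 ≤ m' + 1)]
      have : (∏ i ∈ Finset.Icc 1 m', δ i ^ (m' + 1 - i)) * ((∏ i ∈ Finset.Icc 1 m', δ i))
          = ∏ i ∈ Finset.Icc 1 m', δ i ^ (m' + 1 + 1 - i) := by
        rw [← Finset.prod_mul_distrib]
        apply Finset.prod_congr rfl
        intro i hi
        simp only [Finset.mem_Icc] at hi
        rw [← pow_succ]
        congr 1
        omega
      rw [← mul_assoc, this]
      simp [show m' + 1 + 1 - (m' + 1) = 1 by omega]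
  -- positivity of ρ
  have hρpos : ∀ m, m ≤ n → 0 < ρ m := by
    intro m hm
    rcases Nat.eq_zero_or_pos m with h0 | h1
    · subst h0; rw [hρ0]; norm_num
    · rcases eq_or_lt_of_le hm with hmeq | hmlt
      · subst hmeq; rw [hρn]; positivity
      · rw [hρ' m (by omega)]
        apply Finset.prod_pos
        intro i hi
        apply pow_pos
        apply hδpos
        simp only [Finset.mem_Icc] at hi ⊢
        omega
  -- Q
  set Q : ℕ → ℝ := fun m => ρ n / ρ (m - 1) with hQdef
  have hQpos : ∀ m, 1 ≤ m → m ≤ n → 0 < Q m := by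
    intro m h1 h2
    exact div_pos (hρpos n le_rfl) (hρpos (m - 1) (by omega))
  have hQrec : ∀ m, 1 ≤ m → m ≤ n - 1 → Q m = P m * Q (m + 1) := by
    intro m h1 h2
    simp only [hQdef, Nat.add_sub_cancel]
    rw [hrec m h1 (by omega)]
    have h0 : ρ (m - 1) ≠ 0 := (hρpos (m - 1) (by omega)).ne'
    have hP0 : P m ≠ 0 := (hPpos m).ne'
    field_simp
  have hQn : Q n = δp := by
    have := hrec n (by omega) le_rfl
    simp only [hQdef]
    rw [this, hdpPn]
    field_simp [(hρpos (n - 1) (by omega)).ne']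
  -- key induction
  have key : ∀ d, d ≤ n - 1 → δp ^ (d + 1) ≤ Q (n - d) ∧ Q (n - d) ≤ P (n - d) ^ (d + 1) := by
    intro d
    induction d with
    | zero =>
      intro _
      simp only [Nat.sub_zero, zero_add, pow_one, hQn]
      exact ⟨le_refl _, by rw [← hdpPn]⟩
    | succ d ih =>
      intro hd
      have ih' := ih (by omega)
      have hm1 : 1 ≤ n - (d + 1) := by omega
      have hm2 : n - (d + 1) ≤ n - 1 := by omega
      have hms : n - (d + 1) + 1 = n - d := by omega
      have hQr := hQrec (n - (d + 1)) hm1 hm2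
      rw [hms] at hQr
      constructor
      · rw [hQr, pow_succ']
        apply mul_le_mul
        · rw [hdpP]; exact hPmono _ _ (by omega)
        · exact ih'.1
        · positivity
        · exact (hPpos _).le
      · rw [hQr, pow_succ']
        apply mul_le_mul (le_refl _)
        · calc Q (n - d) ≤ P (n - d) ^ (d + 1) := ih'.2
            _ ≤ P (n - (d + 1)) ^ (d + 1) :=
              pow_le_pow_left₀ (hPpos _).le (hPmono _ _ (by omega)) _
        · exact (hQpos (n - d) (by omega) (by omega)).le
        · exact (hPpos _).le
  -- rewrite σ with natural exponent
  have hσ' : ∀ k, 1 ≤ k → k ≤ n → σ k = Q k ^ (((n + 1 - k : ℕ) : ℝ))⁻¹ := by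
    intro k h1 h2
    rw [hσ k h1 h2]
    simp only [hQdef]
    rw [one_div]
    congr 2
    have : ((n + 1 - k : ℕ) : ℝ) = (n : ℝ) + 1 - (k : ℝ) := by
      push_cast [Nat.cast_sub (by omega : k ≤ n + 1)]
      ring
    rw [this]
  -- Goal 2 : σ n = δp
  have G2 : σ n = δp := by
    rw [hσ' n (by omega) le_rfl, hQn]
    norm_num
  -- Goal 1 : σ (n-1) = δp
  have G1 : σ (n - 1) = δp := by
    rw [hσ' (n - 1) (by omega) (by omega)]
    have hQr := hQrec (n - 1) (by omega) le_rfl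
    rw [show n - 1 + 1 = n by omega, hQn, ← hdpP] at hQr
    rw [hQr, show n + 1 - (n - 1) = 2 by omega, ← sq]
    exact Real.pow_rpow_inv_natCast hδppos.le (by norm_num)
  -- Goal 3 : δp ≤ σ (n-2)
  have G3 : δp ≤ σ (n - 2) := by
    rw [hσ' (n - 2) (by omega) (by omega), show n + 1 - (n - 2) = 3 by omega]
    have hkey := (key 2 (by omega)).1
    calc δp = (δp ^ 3) ^ (((3 : ℕ) : ℝ))⁻¹ :=
          (Real.pow_rpow_inv_natCast hδppos.le (by norm_num)).symm
      _ ≤ Q (n - 2) ^ (((3 : ℕ) : ℝ))⁻¹ := by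
          apply Real.rpow_le_rpow (by positivity) hkey (by positivity)
  -- Goal 4 : chain
  have G4 : ∀ k : ℕ, 1 ≤ k → k ≤ n - 3 → σ (k + 1) ≤ σ k := by
    intro k hk1 hk3
    have hkn : k ≤ n - 1 := by omega
    set e : ℕ := n - k with he
    have he3 : 3 ≤ e := by omega
    have hek : n + 1 - (k + 1) = e := by omega
    have hek1 : n + 1 - k = e + 1 := by omega
    have hQk1pos := hQpos (k + 1) (by omega) (by omega)
    have hQkpos := hQpos k hk1 (by omega)
    have hσk1 : σ (k + 1) = Q (k + 1) ^ (((e : ℕ) : ℝ))⁻¹ := by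
      rw [hσ' (k + 1) (by omega) (by omega), hek]
    have hσk : σ k = Q k ^ (((e + 1 : ℕ) : ℝ))⁻¹ := by
      rw [hσ' k hk1 (by omega), hek1]
    have hσk1nonneg : 0 ≤ σ (k + 1) := by rw [hσk1]; positivity
    have hσknonneg : 0 ≤ σ k := by rw [hσk]; positivity
    -- σ (k+1) ≤ P (k+1)
    have hkeyk1 := key (n - k - 1) (by omega)
    rw [show n - (n - k - 1) = k + 1 by omega, show n - k - 1 + 1 = e by omega] at hkeyk1
    have hσP : σ (k + 1) ≤ P (k + 1) := by
      rw [hσk1]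
      calc Q (k + 1) ^ (((e : ℕ) : ℝ))⁻¹ ≤ (P (k + 1) ^ e) ^ (((e : ℕ) : ℝ))⁻¹ :=
            Real.rpow_le_rpow hQk1pos.le hkeyk1.2 (by positivity)
        _ = P (k + 1) := Real.pow_rpow_inv_natCast (hPpos _).le (by omega)
    -- power identities
    have hpow1 : σ (k + 1) ^ e = Q (k + 1) := by
      rw [hσk1]; exact Real.rpow_inv_natCast_pow hQk1pos.le (by omega)
    have hpow2 : σ k ^ (e + 1) = Q k := by
      rw [hσk]; exact Real.rpow_inv_natCast_pow hQkpos.le (by omega)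
    have hQr := hQrec k hk1 hkn
    have hmain : σ (k + 1) ^ (e + 1) ≤ σ k ^ (e + 1) := by
      rw [hpow2, hQr, pow_succ', hpow1]
      apply mul_le_mul_of_nonneg_right _ hQk1pos.le
      exact le_trans hσP (hPmono k (k + 1) (by omega))
    exact (pow_le_pow_iff_left₀ hσk1nonneg hσknonneg (by omega)).1 hmain
  -- Goal 5 : σ 1 ≤ 1
  have G5 : σ 1 ≤ 1 := by
    rw [hσ' 1 le_rfl (by omega)]
    apply Real.rpow_le_one _ _ (by positivity)
    · exact (hQpos 1 le_rfl (by omega)).le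
    · simp only [hQdef, Nat.sub_self, hρ0, div_one, hρn]
      exact inv_le_one_of_one_le₀ hR
  exact ⟨G1, G2, G3, G4, G5⟩
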